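/- Let α, β ∈ (0,π) and φ, ξ ∈ [0,2π), define u₀ = C_α|0⟩ + e^{iφ}S_α|1⟩, u₁ = −S_α|0⟩ + e^{iφ}C_α|1⟩, v₀ = C_β|0⟩ + e^{iξ}S_β|1⟩, v₁ = −S_β|0⟩ + e^{iξ}C_β|1⟩ in ℂ², and the unit vector ψ_Hardy := (T_α·u₀⊗v₁ + T_β·u₁⊗v₀ + u₁⊗v₁)/√(1+T_α²+T_β²) in ℂ²⊗ℂ². Set r := 1 − S_α²S_β² and s := C_α²/r. Let Alice's measurement A₀ have outcome vectors (|0⟩ for +, |1⟩ for −), A₁ have (u₀ for +, u₁ for −), Bob's B₀ have (|0⟩ for +, |1⟩ for −), and B₁ have (v₀ for +, v₁ for −), with outcome probabilities p(a,b|x,y) = |⟨e_a ⊗ f_b, ψ_Hardy⟩|² where e_a, f_b are the corresponding outcome vectors. Then the sixteen probabilities equal: p(+,+|A₀B₀)=(1−r)r(1−s)s/(1−rs), p(+,−|A₀B₀)=(1−r)²s/(1−rs), p(−,+|A₀B₀)=(1−r)(1−s), p(−,−|A₀B₀)=r; p(+,+|A₀B₁)=(1−r)s, p(+,−|A₀B₁)=0,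 p(−,+|A₀B₁)=(1−r)rs²/(1−rs), p(−,−|A₀B₁)=(1−s)/(1−rs); p(+,+|A₁B₀)=(1−r)(1−s)/(1−rs), p(+,−|A₁B₀)=r(1−s)²/(1−rs), p(−,+|A₁B₀)=0, p(−,−|A₁B₀)=s; p(+,+|A₁B₁)=0, p(+,−|A₁B₁)=1−s, p(−,+|A₁B₁)=(1−r)s/(1−rs), p(−,−|A₁B₁)=r(1−s)s/(1−rs). -/

import Mathlib

open Real Complex

noncomputable section

/-- Computational basis vector `|0⟩` of a qubit. -/
def ket0 : EuclideanSpace ℂ (Fin 2) := WithLp.toLp 2 (fun i => if i = 0 then 1 else 0)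

/-- Computational basis vector `|1⟩` of a qubit. -/
def ket1 : EuclideanSpace ℂ (Fin 2) := WithLp.toLp 2 (fun i => if i = 1 then 1 else 0)

/-- Tensor product of two qubit vectors, as a vector in `ℂ²⊗ℂ² ≅ ℂ⁴`. -/
def tensor (u v : EuclideanSpace ℂ (Fin 2)) : EuclideanSpace ℂ (Fin 2 × Fin 2) :=
  WithLp.toLp 2 (fun p => u p.1 * v p.2)

/-- Born-rule probability of outcome vectors `e`, `f` on the state `ψ`. -/
def bornProb (e f : EuclideanSpace ℂ (Fin 2)) (ψ : EuclideanSpace ℂ (Fin 2 × Fin 2)) : ℝ :=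
  ‖(inner ℂ (tensor e f) ψ : ℂ)‖ ^ 2

private lemma tensor_inner' (a b c d : EuclideanSpace ℂ (Fin 2)) :
    (inner ℂ (tensor a b) (tensor c d) : ℂ) = (inner ℂ a c : ℂ) * (inner ℂ b d : ℂ) := by
  simp only [PiLp.inner_apply, RCLike.inner_apply, tensor, Fintype.sum_prod_type,
    Fin.sum_univ_two, map_mul]
  ring

private lemma exp_conj_self' (θ : ℝ) :
    (starRingEnd ℂ) (Complex.exp (Complex.I * θ)) * Complex.exp (Complex.I * θ) = 1 := by
  rw [← Complex.exp_conj, ← Complex.exp_add]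
  have h : (starRingEnd ℂ) (Complex.I * θ) + Complex.I * θ = 0 := by
    simp [map_mul, Complex.conj_ofReal]
  rw [h, Complex.exp_zero]

private lemma norm_exp_I' (θ : ℝ) : ‖Complex.exp (Complex.I * θ)‖ = 1 := by
  simp [Complex.norm_exp]

private lemma nsq0' (t : ℝ) : ‖((t : ℂ))‖ ^ 2 = t ^ 2 := by
  simp [Complex.norm_real, sq_abs]

private lemma nsq1' (t θ : ℝ) : ‖(t : ℂ) * Complex.exp (Complex.I * θ)‖ ^ 2 = t ^ 2 := by
  rw [norm_mul, norm_exp_I', mul_one, nsq0']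

private lemma nsq2' (t θ₁ θ₂ : ℝ) :
    ‖(t : ℂ) * (Complex.exp (Complex.I * θ₁) * Complex.exp (Complex.I * θ₂))‖ ^ 2 = t ^ 2 := by
  rw [norm_mul, norm_mul, norm_exp_I', norm_exp_I', mul_one, mul_one, nsq0']

set_option maxHeartbeats 2000000 in
theorem hardy_behavior_probability_table
    (α β φ ξ : ℝ) (hα : α ∈ Set.Ioo 0 π) (hβ : β ∈ Set.Ioo 0 π)
    (hφ : φ ∈ Set.Ico 0 (2 * π)) (hξ : ξ ∈ Set.Ico 0 (2 * π))
    (u0 u1 v0 v1 : EuclideanSpace ℂ (Fin 2))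
    (hu0 : u0 = (Real.cos (α / 2) : ℂ) • ket0 + (Complex.exp (Complex.I * φ) * Real.sin (α / 2)) • ket1)
    (hu1 : u1 = (-(Real.sin (α / 2) : ℂ)) • ket0 + (Complex.exp (Complex.I * φ) * Real.cos (α / 2)) • ket1)
    (hv0 : v0 = (Real.cos (β / 2) : ℂ) • ket0 + (Complex.exp (Complex.I * ξ) * Real.sin (β / 2)) • ket1)
    (hv1 : v1 = (-(Real.sin (β / 2) : ℂ)) • ket0 + (Complex.exp (Complex.I * ξ) * Real.cos (β / 2)) • ket1)
    (ψ : EuclideanSpace ℂ (Fin 2 × Fin 2))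
    (hψ : ψ = ((Real.sqrt (1 + Real.tan (α / 2) ^ 2 + Real.tan (β / 2) ^ 2) : ℂ))⁻¹ •
        ((Real.tan (α / 2) : ℂ) • tensor u0 v1 + (Real.tan (β / 2) : ℂ) • tensor u1 v0 +
          tensor u1 v1))
    (r s : ℝ)
    (hr : r = 1 - Real.sin (α / 2) ^ 2 * Real.sin (β / 2) ^ 2)
    (hs : s = Real.cos (α / 2) ^ 2 / r) :
    -- setting pair (A₀, B₀)
    bornProb ket0 ket0 ψ = (1 - r) * r * (1 - s) * s / (1 - r * s) ∧
    bornProb ket0 ket1 ψ = (1 - r) ^ 2 * s / (1 - r * s) ∧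
    bornProb ket1 ket0 ψ = (1 - r) * (1 - s) ∧
    bornProb ket1 ket1 ψ = r ∧
    -- setting pair (A₀, B₁)
    bornProb ket0 v0 ψ = (1 - r) * s ∧
    bornProb ket0 v1 ψ = 0 ∧
    bornProb ket1 v0 ψ = (1 - r) * r * s ^ 2 / (1 - r * s) ∧
    bornProb ket1 v1 ψ = (1 - s) / (1 - r * s) ∧
    -- setting pair (A₁, B₀)
    bornProb u0 ket0 ψ = (1 - r) * (1 - s) / (1 - r * s) ∧
    bornProb u0 ket1 ψ = r * (1 - s) ^ 2 / (1 - r * s) ∧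
    bornProb u1 ket0 ψ = 0 ∧
    bornProb u1 ket1 ψ = s ∧
    -- setting pair (A₁, B₁)
    bornProb u0 v0 ψ = 0 ∧
    bornProb u0 v1 ψ = 1 - s ∧
    bornProb u1 v0 ψ = (1 - r) * s / (1 - r * s) ∧
    bornProb u1 v1 ψ = r * (1 - s) * s / (1 - r * s) := by
  obtain ⟨hα0, hα1⟩ := hα
  obtain ⟨hβ0, hβ1⟩ := hβ
  have pa : Real.sin (α/2) ^ 2 + Real.cos (α/2) ^ 2 = 1 := Real.sin_sq_add_cos_sq _
  have pb : Real.sin (β/2) ^ 2 + Real.cos (β/2) ^ 2 = 1 := Real.sin_sq_add_cos_sq _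
  have hca : 0 < Real.cos (α/2) := Real.cos_pos_of_mem_Ioo ⟨by linarith [Real.pi_pos], by linarith⟩
  have hsa : 0 < Real.sin (α/2) := Real.sin_pos_of_pos_of_lt_pi (by linarith) (by linarith)
  have hcb : 0 < Real.cos (β/2) := Real.cos_pos_of_mem_Ioo ⟨by linarith [Real.pi_pos], by linarith⟩
  have hsb : 0 < Real.sin (β/2) := Real.sin_pos_of_pos_of_lt_pi (by linarith) (by linarith)
  have hta : Real.tan (α/2) = Real.sin (α/2) / Real.cos (α/2) := Real.tan_eq_sin_div_cos _
  have htb : Real.tan (β/2) = Real.sin (β/2) / Real.cos (β/2) := Real.tan_eq_sin_div_cos _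
  set sa := Real.sin (α/2)
  set ca := Real.cos (α/2)
  set sb := Real.sin (β/2)
  set cb := Real.cos (β/2)
  set ta := Real.tan (α/2)
  set tb := Real.tan (β/2)
  set N := Real.sqrt (1 + ta ^ 2 + tb ^ 2) with hN_def
  have hNpos : 0 < N := Real.sqrt_pos.mpr (by positivity)
  have hNsq : N ^ 2 = r / (ca^2 * cb^2) := by
    rw [hN_def, Real.sq_sqrt (by positivity), hta, htb, hr]
    field_simp
    linear_combination (cb^2+sb^2)*pa + pb
  have hNinv : (N⁻¹)^2 = ca^2*cb^2 / r := by
    rw [inv_pow, hNsq, inv_div]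
  have hrpos : 0 < r := by
    have h : r = ca^2 + sa^2*cb^2 := by rw [hr]; linear_combination -pa - sa^2*pb
    rw [h]; positivity
  have h1r : 1 - r = sa^2 * sb^2 := by rw [hr]; ring
  have hrs : r * s = ca^2 := by rw [hs]; field_simp
  have h1rs : 1 - r * s = sa^2 := by rw [hrs]; linarith [pa]
  have h1s : 1 - s = sa^2 * cb^2 / r := by
    rw [hs]
    field_simp
    linear_combination hr - pa - sa^2*pb
  have hNC : (N:ℂ) ≠ 0 := Complex.ofReal_ne_zero.mpr hNpos.ne'
  have hcaC : (ca:ℂ) ≠ 0 := Complex.ofReal_ne_zero.mpr hca.ne'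
  have hcbC : (cb:ℂ) ≠ 0 := Complex.ofReal_ne_zero.mpr hcb.ne'
  have cpa : (sa:ℂ)^2 + (ca:ℂ)^2 = 1 := by exact_mod_cast pa
  have cpb : (sb:ℂ)^2 + (cb:ℂ)^2 = 1 := by exact_mod_cast pb
  have key : ∀ e f : EuclideanSpace ℂ (Fin 2), (inner ℂ (tensor e f) ψ : ℂ) =
      (N:ℂ)⁻¹ * ((ta:ℂ) * ((inner ℂ e u0 : ℂ) * (inner ℂ f v1 : ℂ)) +
        (tb:ℂ) * ((inner ℂ e u1 : ℂ) * (inner ℂ f v0 : ℂ)) +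
        (inner ℂ e u1 : ℂ) * (inner ℂ f v1 : ℂ)) := by
    intro e f
    rw [hψ]
    simp only [inner_smul_right, inner_add_right, tensor_inner']
  have ik0u0 : (inner ℂ ket0 u0 : ℂ) = (ca : ℂ) := by
    rw [hu0, PiLp.inner_apply]; simp [ket0, ket1, PiLp.inner_apply, RCLike.inner_apply, Fin.sum_univ_two]
  have ik0u1 : (inner ℂ ket0 u1 : ℂ) = -(sa : ℂ) := by
    rw [hu1, PiLp.inner_apply]; simp [ket0, ket1, PiLp.inner_apply, RCLike.inner_apply, Fin.sum_univ_two]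
  have ik1u0 : (inner ℂ ket1 u0 : ℂ) = Complex.exp (Complex.I * φ) * (sa : ℂ) := by
    rw [hu0, PiLp.inner_apply]; simp [ket0, ket1, PiLp.inner_apply, RCLike.inner_apply, Fin.sum_univ_two]
  have ik1u1 : (inner ℂ ket1 u1 : ℂ) = Complex.exp (Complex.I * φ) * (ca : ℂ) := by
    rw [hu1, PiLp.inner_apply]; simp [ket0, ket1, PiLp.inner_apply, RCLike.inner_apply, Fin.sum_univ_two]
  have ik0v0 : (inner ℂ ket0 v0 : ℂ) = (cb : ℂ) := by
    rw [hv0, PiLp.inner_apply]; simp [ket0, ket1, PiLp.inner_apply, RCLike.inner_apply, Fin.sum_univ_two]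
  have ik0v1 : (inner ℂ ket0 v1 : ℂ) = -(sb : ℂ) := by
    rw [hv1, PiLp.inner_apply]; simp [ket0, ket1, PiLp.inner_apply, RCLike.inner_apply, Fin.sum_univ_two]
  have ik1v0 : (inner ℂ ket1 v0 : ℂ) = Complex.exp (Complex.I * ξ) * (sb : ℂ) := by
    rw [hv0, PiLp.inner_apply]; simp [ket0, ket1, PiLp.inner_apply, RCLike.inner_apply, Fin.sum_univ_two]
  have ik1v1 : (inner ℂ ket1 v1 : ℂ) = Complex.exp (Complex.I * ξ) * (cb : ℂ) := by
    rw [hv1, PiLp.inner_apply]; simp [ket0, ket1, PiLp.inner_apply, RCLike.inner_apply, Fin.sum_univ_two]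
  have iu0u0 : (inner ℂ u0 u0 : ℂ) = 1 := by
    rw [hu0, PiLp.inner_apply]; simp [ket0, ket1, PiLp.inner_apply, RCLike.inner_apply, Fin.sum_univ_two,
      map_mul, Complex.conj_ofReal, abs_of_pos hca, abs_of_pos hsa]
    linear_combination cpa
  have iu0u1 : (inner ℂ u0 u1 : ℂ) = 0 := by
    rw [hu0, hu1, PiLp.inner_apply]; simp [ket0, ket1, PiLp.inner_apply, RCLike.inner_apply, Fin.sum_univ_two,
      map_mul, Complex.conj_ofReal]
    linear_combination (sa:ℂ)*(ca:ℂ) * exp_conj_self' φ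
  have iu1u0 : (inner ℂ u1 u0 : ℂ) = 0 := by
    rw [hu0, hu1, PiLp.inner_apply]; simp [ket0, ket1, PiLp.inner_apply, RCLike.inner_apply, Fin.sum_univ_two,
      map_mul, Complex.conj_ofReal]
    linear_combination (sa:ℂ)*(ca:ℂ) * exp_conj_self' φ
  have iu1u1 : (inner ℂ u1 u1 : ℂ) = 1 := by
    rw [hu1, PiLp.inner_apply]; simp [ket0, ket1, PiLp.inner_apply, RCLike.inner_apply, Fin.sum_univ_two,
      map_mul, Complex.conj_ofReal, abs_of_pos hca, abs_of_pos hsa]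
    linear_combination cpa
  have iv0v0 : (inner ℂ v0 v0 : ℂ) = 1 := by
    rw [hv0, PiLp.inner_apply]; simp [ket0, ket1, PiLp.inner_apply, RCLike.inner_apply, Fin.sum_univ_two,
      map_mul, Complex.conj_ofReal, abs_of_pos hcb, abs_of_pos hsb]
    linear_combination cpb
  have iv0v1 : (inner ℂ v0 v1 : ℂ) = 0 := by
    rw [hv0, hv1, PiLp.inner_apply]; simp [ket0, ket1, PiLp.inner_apply, RCLike.inner_apply, Fin.sum_univ_two,
      map_mul, Complex.conj_ofReal]
    linear_combination (sb:ℂ)*(cb:ℂ) * exp_conj_self' ξ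
  have iv1v0 : (inner ℂ v1 v0 : ℂ) = 0 := by
    rw [hv0, hv1, PiLp.inner_apply]; simp [ket0, ket1, PiLp.inner_apply, RCLike.inner_apply, Fin.sum_univ_two,
      map_mul, Complex.conj_ofReal]
    linear_combination (sb:ℂ)*(cb:ℂ) * exp_conj_self' ξ
  have iv1v1 : (inner ℂ v1 v1 : ℂ) = 1 := by
    rw [hv1, PiLp.inner_apply]; simp [ket0, ket1, PiLp.inner_apply, RCLike.inner_apply, Fin.sum_univ_two,
      map_mul, Complex.conj_ofReal, abs_of_pos hcb, abs_of_pos hsb]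
    linear_combination cpb
  refine ⟨?_, ?_, ?_, ?_, ?_, ?_, ?_, ?_, ?_, ?_, ?_, ?_, ?_, ?_, ?_, ?_⟩
  · have hz : (inner ℂ (tensor ket0 ket0) ψ : ℂ) = ((N⁻¹ * (-(sa*sb)) : ℝ) : ℂ) := by
      rw [key, ik0u0, ik0u1, ik0v0, ik0v1, hta, htb]
      push_cast
      field_simp
      try ring
    unfold bornProb
    rw [hz, nsq0']
    rw [mul_pow, hNinv]
    rw [h1rs, h1r, h1s, hs]
    field_simp
  · have hz : (inner ℂ (tensor ket0 ket1) ψ : ℂ) = ((N⁻¹ * (-(sa*sb^2/cb)) : ℝ) : ℂ) * Complex.exp (Complex.I * (ξ:ℝ)) := by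
      rw [key, ik0u0, ik0u1, ik1v0, ik1v1, hta, htb]
      push_cast
      field_simp
      try ring
    unfold bornProb
    rw [hz, nsq1']
    rw [mul_pow, hNinv]
    rw [h1rs, h1r, hs]
    field_simp
  · have hz : (inner ℂ (tensor ket1 ket0) ψ : ℂ) = ((N⁻¹ * (-(sa^2*sb/ca)) : ℝ) : ℂ) * Complex.exp (Complex.I * (φ:ℝ)) := by
      rw [key, ik1u0, ik1u1, ik0v0, ik0v1, hta, htb]
      push_cast
      field_simp
      try ring
    unfold bornProb
    rw [hz, nsq1']
    rw [mul_pow, hNinv]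
    rw [h1r, h1s]
    field_simp
  · have hz : (inner ℂ (tensor ket1 ket1) ψ : ℂ) = ((N⁻¹ * ((ca*cb + sa^2*cb/ca + sb^2*ca/cb)) : ℝ) : ℂ) * (Complex.exp (Complex.I * (φ:ℝ)) * Complex.exp (Complex.I * (ξ:ℝ))) := by
      rw [key, ik1u0, ik1u1, ik1v0, ik1v1, hta, htb]
      push_cast
      field_simp
      try ring
    unfold bornProb
    rw [hz, nsq2']
    have hx : ca*cb + sa^2*cb/ca + sb^2*ca/cb = r/(ca*cb) := by
      field_simp
      linear_combination (cb^2+sb^2)*pa + pb - hr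
    rw [hx]
    rw [mul_pow, hNinv]
    field_simp
  · have hz : (inner ℂ (tensor ket0 v0) ψ : ℂ) = ((N⁻¹ * (-(sa*sb/cb)) : ℝ) : ℂ) := by
      rw [key, ik0u0, ik0u1, iv0v0, iv0v1, hta, htb]
      push_cast
      field_simp
      try ring
    unfold bornProb
    rw [hz, nsq0']
    rw [mul_pow, hNinv]
    rw [h1r, hs]
    field_simp
  · have hz : (inner ℂ (tensor ket0 v1) ψ : ℂ) = 0 := by
      rw [key, ik0u0, ik0u1, iv1v0, iv1v1, hta, htb]
      push_cast
      field_simp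
      ring
    unfold bornProb
    rw [hz]
    simp
  · have hz : (inner ℂ (tensor ket1 v0) ψ : ℂ) = ((N⁻¹ * ((ca*sb/cb)) : ℝ) : ℂ) * Complex.exp (Complex.I * (φ:ℝ)) := by
      rw [key, ik1u0, ik1u1, iv0v0, iv0v1, hta, htb]
      push_cast
      field_simp
      try ring
    unfold bornProb
    rw [hz, nsq1']
    rw [mul_pow, hNinv]
    rw [h1rs, h1r, hs]
    field_simp
  · have hz : (inner ℂ (tensor ket1 v1) ψ : ℂ) = ((N⁻¹ * ((sa^2/ca + ca)) : ℝ) : ℂ) * Complex.exp (Complex.I * (φ:ℝ)) := by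
      rw [key, ik1u0, ik1u1, iv1v0, iv1v1, hta, htb]
      push_cast
      field_simp
      try ring
    unfold bornProb
    rw [hz, nsq1']
    have hx : sa^2/ca + ca = 1/ca := by
      field_simp; linarith [pa]
    rw [hx]
    rw [mul_pow, hNinv]
    rw [h1rs, h1s]
    field_simp
  · have hz : (inner ℂ (tensor u0 ket0) ψ : ℂ) = ((N⁻¹ * (-(sa*sb/ca)) : ℝ) : ℂ) := by
      rw [key, iu0u0, iu0u1, ik0v0, ik0v1, hta, htb]
      push_cast
      field_simp
      try ring
    unfold bornProb
    rw [hz, nsq0']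
    rw [mul_pow, hNinv]
    rw [h1rs, h1r, h1s]
    field_simp
  · have hz : (inner ℂ (tensor u0 ket1) ψ : ℂ) = ((N⁻¹ * ((sa*cb/ca)) : ℝ) : ℂ) * Complex.exp (Complex.I * (ξ:ℝ)) := by
      rw [key, iu0u0, iu0u1, ik1v0, ik1v1, hta, htb]
      push_cast
      field_simp
      try ring
    unfold bornProb
    rw [hz, nsq1']
    rw [mul_pow, hNinv]
    rw [h1rs, h1s]
    field_simp
  · have hz : (inner ℂ (tensor u1 ket0) ψ : ℂ) = 0 := by
      rw [key, iu1u0, iu1u1, ik0v0, ik0v1, hta, htb]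
      push_cast
      field_simp
      ring
    unfold bornProb
    rw [hz]
    simp
  · have hz : (inner ℂ (tensor u1 ket1) ψ : ℂ) = ((N⁻¹ * ((sb^2/cb + cb)) : ℝ) : ℂ) * Complex.exp (Complex.I * (ξ:ℝ)) := by
      rw [key, iu1u0, iu1u1, ik1v0, ik1v1, hta, htb]
      push_cast
      field_simp
      try ring
    unfold bornProb
    rw [hz, nsq1']
    have hx : sb^2/cb + cb = 1/cb := by
      field_simp; linarith [pb]
    rw [hx]
    rw [mul_pow, hNinv]
    rw [hs]
    field_simp
  · have hz : (inner ℂ (tensor u0 v0) ψ : ℂ) = 0 := by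
      rw [key, iu0u0, iu0u1, iv0v0, iv0v1, hta, htb]
      push_cast
      field_simp
      ring
    unfold bornProb
    rw [hz]
    simp
  · have hz : (inner ℂ (tensor u0 v1) ψ : ℂ) = ((N⁻¹ * ((sa/ca)) : ℝ) : ℂ) := by
      rw [key, iu0u0, iu0u1, iv1v0, iv1v1, hta, htb]
      push_cast
      field_simp
      try ring
    unfold bornProb
    rw [hz, nsq0']
    rw [mul_pow, hNinv]
    rw [h1s]
    field_simp
  · have hz : (inner ℂ (tensor u1 v0) ψ : ℂ) = ((N⁻¹ * ((sb/cb)) : ℝ) : ℂ) := by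
      rw [key, iu1u0, iu1u1, iv0v0, iv0v1, hta, htb]
      push_cast
      field_simp
      try ring
    unfold bornProb
    rw [hz, nsq0']
    rw [mul_pow, hNinv]
    rw [h1rs, h1r, hs]
    field_simp
  · have hz : (inner ℂ (tensor u1 v1) ψ : ℂ) = ((N⁻¹ * ((1:ℝ)) : ℝ) : ℂ) := by
      rw [key, iu1u0, iu1u1, iv1v0, iv1v1, hta, htb]
      push_cast
      field_simp
      try ring
    unfold bornProb
    rw [hz, nsq0']
    rw [mul_pow, hNinv]
    rw [h1rs, h1s, hs]
    field_simp

end
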